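/- The group of totally positive units u ∈ O_F^× whose multiplication action on A_Δ = 𝔡⁻¹/O_F is trivial (i.e. (u−1)·𝔡⁻¹ ⊆ O_F) is exactly the infinite cyclic group generated by ε_Δ := (ε_F⁺)². Moreover the group {u ∈ O_F^× : Nm(u) = 1} equals {±(ε_F⁺)ⁿ : n ∈ ℤ}, and its quotient by ⟨ε_Δ⟩ is isomorphic to (ℤ/2ℤ)², generated by the classes of −1 and ε_F⁺. -/

import Mathlib

open NumberField
open scoped nonZeroDivisors

attribute [local instance] Classical.propDecidable

noncomputable section

/-- `d` is a fundamental discriminant (with `1` allowed, corresponding to the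
trivial discriminant): either `d ≡ 1 (mod 4)` and `d` is squarefree, or
`d = 4m` with `m` squarefree and `m ≡ 2, 3 (mod 4)`. -/
def IsFundamentalDiscriminant (d : ℤ) : Prop :=
  (d % 4 = 1 ∧ Squarefree d) ∨
  (d % 4 = 0 ∧ Squarefree (d / 4) ∧ (d / 4 % 4 = 2 ∨ d / 4 % 4 = 3))

/-- Setup: the real quadratic field `F = ℚ(√Δ) ⊂ ℝ` of fundamental discriminant
`Δ > 1`, given as an abstract number field `F` of degree `2`, together with a real
embedding `ι : F → ℝ`, the nontrivial Galois conjugation `σ : F → F` (restricting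
to `σO` on the ring of integers) and the totally positive square root `sΔ` of `Δ`
in `𝓞 F` (so that `𝔡 = (sΔ)` is the different ideal and `𝔡⁻¹ = (1/√Δ)𝓞 F`). -/
structure QS where
  F : Type
  [fld : Field F]
  [nf : NumberField F]
  Δ : ℤ
  hΔ : 1 < Δ
  hfund : IsFundamentalDiscriminant Δ
  hdeg : Module.finrank ℚ F = 2
  ι : F →+* ℝ
  σ : F ≃+* F
  hσ : ∀ x, σ (σ x) = x
  hσne : σ ≠ RingEquiv.refl F
  sΔ : 𝓞 F
  hsΔ : (algebraMap (𝓞 F) F sΔ) * (algebraMap (𝓞 F) F sΔ) = (Δ : F)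
  hsΔpos : 0 < ι (algebraMap (𝓞 F) F sΔ)
  hsΔσ : σ (algebraMap (𝓞 F) F sΔ) = - algebraMap (𝓞 F) F sΔ
  σO : 𝓞 F →+* 𝓞 F
  hσO : ∀ x : 𝓞 F, algebraMap (𝓞 F) F (σO x) = σ (algebraMap (𝓞 F) F x)

attribute [instance] QS.fld QS.nf

/-- The inclusion `𝓞 F → F`. -/
def QS.toF (S : QS) (x : 𝓞 S.F) : S.F := algebraMap (𝓞 S.F) S.F x

/-- `√Δ` as an element of `F`. -/
def QS.sqrtΔ (S : QS) : S.F := S.toF S.sΔ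

/-- `x ∈ F` is totally positive. -/
def QS.Pos (S : QS) (x : S.F) : Prop := 0 < S.ι x ∧ 0 < S.ι (S.σ x)

/-- `x ∈ F` is an algebraic integer, i.e. lies in `𝓞 F`. -/
def QS.isInt (S : QS) (x : S.F) : Prop := ∃ a : 𝓞 S.F, S.toF a = x

/-- `x ∈ 𝔡⁻¹ = (1/√Δ)𝓞 F`. -/
def QS.inDual (S : QS) (x : S.F) : Prop := S.isInt (S.sqrtΔ * x)

/-- The norm `Nm(x) = x x'`, computed in `ℝ` via the embedding `ι`. -/
def QS.NmR (S : QS) (x : S.F) : ℝ := S.ι x * S.ι (S.σ x)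

/-- The trace `Tr(x) = x + x'`, computed in `ℝ` via the embedding `ι`. -/
def QS.TrR (S : QS) (x : S.F) : ℝ := S.ι x + S.ι (S.σ x)

/-- The different ideal `𝔡 = (√Δ)` of `𝓞 F`. -/
def QS.dIdeal (S : QS) : Ideal (𝓞 S.F) := Ideal.span {S.sΔ}

/-- The sign of `x ∈ F` (under the fixed real embedding). -/
def QS.sgn (S : QS) (x : S.F) : ℤ := if 0 < S.ι x then 1 else -1

/-- `r(x) = |x/x'|`. -/
def QS.rQ (S : QS) (x : S.F) : ℝ := |S.ι x / S.ι (S.σ x)|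

/-- `P` is the unique prime ideal of `𝓞 F` above the rational prime `p`. -/
def QS.uniquePrimeAbove (S : QS) (p : ℕ) (P : Ideal (𝓞 S.F)) : Prop :=
  P.IsPrime ∧ P ≠ ⊥ ∧ P ≠ ⊤ ∧ (p : 𝓞 S.F) ∈ P ∧
    ∀ Q : Ideal (𝓞 S.F), Q.IsPrime → Q ≠ ⊥ → Q ≠ ⊤ → (p : 𝓞 S.F) ∈ Q → Q = P

/-- The set `Nm⁻(𝔟) = 𝔟/𝔟'` of `x ∈ F` with `x·𝔟' ⊆ 𝔟` (for invertible `𝔟`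
this is exactly the fractional ideal `𝔟 (𝔟')⁻¹`). -/
def QS.nmMinus (S : QS) (b : Ideal (𝓞 S.F)) : Set S.F :=
  {x | ∀ y ∈ b, ∃ c ∈ b, S.toF c = x * S.toF (S.σO y)}

/-- The set `Nm⁻(𝔟)𝔡⁻¹ = 𝔟 (𝔟')⁻¹ 𝔡⁻¹`, i.e. those `x ∈ F` with `x √Δ 𝔟' ⊆ 𝔟`. -/
def QS.nmMinusDual (S : QS) (b : Ideal (𝓞 S.F)) : Set S.F :=
  {x | ∀ y ∈ b, ∃ c ∈ b, S.toF c = x * S.sqrtΔ * S.toF (S.σO y)}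

/-- `x ≡ h` in `A_Δ = Nm⁻(𝔟)𝔡⁻¹ / Nm⁻(𝔟)` under the canonical identification
with `𝔡⁻¹/𝓞 F`: the difference decomposes as an element of `Nm⁻(𝔟)` plus an
algebraic integer. -/
def QS.congMod (S : QS) (b : Ideal (𝓞 S.F)) (x h : S.F) : Prop :=
  ∃ a ∈ S.nmMinus b, ∃ r : 𝓞 S.F, x - h = a + S.toF r

/-- The lattice point set `{λ ∈ Nm⁻(𝔟)𝔡⁻¹ : λ ≡ h in A_Δ, Nm(λ) = m}`. -/
def QS.latticeSet (S : QS) (b : Ideal (𝓞 S.F)) (m : ℝ) (h : S.F) : Set S.F :=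
  {x | x ∈ S.nmMinusDual b ∧ S.congMod b x h ∧ S.NmR x = m}

/-- Fundamental domain `1 ≤ |x/x'| < e²` for the action of `Γ_Δ = ⟨ε_Δ⟩`
(where `e = ε_Δ`), intersected with a set `T`. -/
def QS.fdSet (S : QS) (e : ℝ) (T : Set S.F) : Set S.F :=
  {x ∈ T | 1 ≤ S.rQ x ∧ S.rQ x < e ^ 2}

/-- `c_𝔞(m, h) = Σ_Λ sgn(Λ)`, summed over the (finitely many) `Γ_Δ`-orbits of
`{λ ∈ Nm⁻(𝔟)𝔡⁻¹ : λ ≡ h, Nm(λ) = m}`, each orbit represented by its element in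
the fundamental domain `1 ≤ |λ/λ'| < ε_Δ²`.  Here `e = ε_Δ`. -/
def QS.cIdeal (S : QS) (e : ℝ) (b : Ideal (𝓞 S.F)) (m : ℝ) (h : S.F) : ℤ :=
  ∑ᶠ x ∈ S.fdSet e (S.latticeSet b m h), S.sgn x

/-- `a(Λ)` for an orbit with representative `x` in the fundamental domain:
`sgn(x) log|x/x'|` if `|x/x'| ≠ 1`, and `−log ε_Δ` otherwise (`e = ε_Δ`). -/
def QS.aVal (S : QS) (e : ℝ) (x : S.F) : ℝ :=
  if S.rQ x ≠ 1 then (S.sgn x : ℝ) * Real.log (S.rQ x) else - Real.log e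

/-- `tc_𝔞(m, h) = Σ_Λ a(Λ)` over the `Γ_Δ`-orbits as in `QS.cIdeal`. -/
def QS.tcIdeal (S : QS) (e : ℝ) (b : Ideal (𝓞 S.F)) (m : ℝ) (h : S.F) : ℝ :=
  ∑ᶠ x ∈ S.fdSet e (S.latticeSet b m h), S.aVal e x

/-- Two integral ideals are narrowly equivalent (same class in `Cl⁺(F)`). -/
def QS.narrowEq (S : QS) (a b : Ideal (𝓞 S.F)) : Prop :=
  ∃ α β : 𝓞 S.F, S.Pos (S.toF α) ∧ S.Pos (S.toF β) ∧
    Ideal.span {α} * a = Ideal.span {β} * b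

/-- `SF` is a set of integral ideals coprime to `𝔡` representing the classes of
the narrow class group `Cl⁺(F)` exactly once. -/
def QS.IsRepSet (S : QS) (SF : Finset (Ideal (𝓞 S.F))) : Prop :=
  (∀ b ∈ SF, b ≠ ⊥ ∧ IsCoprime b S.dIdeal) ∧
  ∀ a : Ideal (𝓞 S.F), a ≠ ⊥ → ∃! b, b ∈ SF ∧ S.narrowEq a b

/-- `χ` is a genus character of `F`: a `{±1}`-valued, multiplicative function on
integral ideals, invariant under narrow equivalence, of the form `χ_{Δ₁,Δ₂}`
for a factorization `Δ = Δ₁Δ₂` into coprime fundamental discriminants, i.e.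
taking the value `(Δ₁/p)` (Legendre symbol) on degree-one primes `𝔭 ∤ Δ`. -/
def QS.IsGenusChar (S : QS) (χ : Ideal (𝓞 S.F) → ℤ) : Prop :=
  (∀ a b : Ideal (𝓞 S.F), a ≠ ⊥ → b ≠ ⊥ → χ (a * b) = χ a * χ b) ∧
  (∀ a : Ideal (𝓞 S.F), a ≠ ⊥ → χ a = 1 ∨ χ a = -1) ∧
  (∀ a b : Ideal (𝓞 S.F), a ≠ ⊥ → b ≠ ⊥ → S.narrowEq a b → χ a = χ b) ∧
  (∃ Δ₁ Δ₂ : ℤ, S.Δ = Δ₁ * Δ₂ ∧ IsCoprime Δ₁ Δ₂ ∧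
    IsFundamentalDiscriminant Δ₁ ∧ IsFundamentalDiscriminant Δ₂ ∧
    ∀ (p : ℕ) (hp : p.Prime), p ≠ 2 → ¬ ((p : ℤ) ∣ S.Δ) →
      ∀ P : Ideal (𝓞 S.F), Ideal.absNorm P = p → χ P = @legendreSym p ⟨hp⟩ Δ₁)

/-- `χ` is an odd genus character: `χ([𝔡]) = −1`. -/
def QS.IsOddGenusChar (S : QS) (χ : Ideal (𝓞 S.F) → ℤ) : Prop :=
  S.IsGenusChar χ ∧ χ S.dIdeal = -1

/-- `c_χ(m, h) = Σ_{[𝔟] ∈ Cl⁺(F)} χ([𝔟]) Σ_Λ sgn(Λ)`, the sum over narrow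
classes realized by summing over the representative set `SF`; here `λ` runs over
`Γ_Δ`-orbits of `{λ ∈ Nm⁻(𝔟)𝔡⁻¹ : λ ≡ h, Nm(λ) = −m}` (`e = ε_Δ`). -/
def QS.cChi (S : QS) (e : ℝ) (SF : Finset (Ideal (𝓞 S.F)))
    (χ : Ideal (𝓞 S.F) → ℤ) (m : ℝ) (h : S.F) : ℤ :=
  ∑ b ∈ SF, χ b * S.cIdeal e b (-m) h

/-- `tc_χ(m, h) = (1/2) Σ_{𝔟 ∈ S_F} χ([𝔟]) tc_{Nm⁻(𝔟)}(m, h)`. -/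
def QS.tcChi (S : QS) (e : ℝ) (SF : Finset (Ideal (𝓞 S.F)))
    (χ : Ideal (𝓞 S.F) → ℤ) (m : ℝ) (h : S.F) : ℝ :=
  (1 / 2) * ∑ b ∈ SF, (χ b : ℝ) * S.tcIdeal e b m h

/-- `s_h = #{s ∈ {1, ε_F⁺} : s h = h} − #{s ∈ {−1, −ε_F⁺} : s h = h}` in
`A_Δ = 𝔡⁻¹/𝓞 F`. -/
def QS.shVal (S : QS) (εp : (𝓞 S.F)ˣ) (h : S.F) : ℤ :=
  ((if S.isInt ((1 : S.F) * h - h) then 1 else 0)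
      + (if S.isInt (S.toF ↑εp * h - h) then 1 else 0))
    - ((if S.isInt ((-1 : S.F) * h - h) then 1 else 0)
      + (if S.isInt ((-(S.toF ↑εp)) * h - h) then 1 else 0))

/-- `χ(sqrt(𝔞, h))`: the sum of `χ([𝔟])` over those classes `[𝔟] ∈ Cl⁺(F)`
(represented by `SF`) for which `𝔞 = Nm⁻(𝔟)(μ)` for some `μ > 0` with
`μ/√Δ ∈ 𝔡⁻¹` representing `h ∈ A_Δ`. -/
def QS.chiSqrt (S : QS) (SF : Finset (Ideal (𝓞 S.F))) (χ : Ideal (𝓞 S.F) → ℤ)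
    (a : Ideal (𝓞 S.F)) (h : S.F) : ℤ :=
  ∑ b ∈ SF, χ b *
    (if ∃ μ : S.F, 0 < S.ι μ ∧ S.isInt μ ∧ S.isInt (μ / S.sqrtΔ - h) ∧
        {z : S.F | ∃ c ∈ a, S.toF c = z} = {z : S.F | ∃ y ∈ S.nmMinus b, z = μ * y}
      then 1 else 0)

/-- `σ_χ(𝔞) = Σ_{𝔟 ⊇ 𝔞} χ([𝔟])`, the divisor sum of `χ`. -/
def QS.sigmaChi (S : QS) (χ : Ideal (𝓞 S.F) → ℤ) (a : Ideal (𝓞 S.F)) : ℤ :=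
  ∑ᶠ b ∈ {b : Ideal (𝓞 S.F) | a ≤ b}, χ b

/-- `ord_𝔩(J)`, the exponent of the prime `𝔩` in the nonzero integral ideal `J`. -/
def QS.ordI (S : QS) (l J : Ideal (𝓞 S.F)) : ℕ := sSup {k : ℕ | J ≤ l ^ k}


lemma sq4 (x : ℤ) : (∃ c, x^2 = 4*c) ∨ (∃ c, x^2 = 4*c + 1) := by
  rcases Int.even_or_odd x with ⟨c, hc⟩ | ⟨c, hc⟩
  · exact Or.inl ⟨c^2, by subst hc; ring⟩
  · exact Or.inr ⟨c^2 + c, by subst hc; ring⟩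

lemma Z1 {Δ t k : ℤ} (hΔ : 1 < Δ) (hf : IsFundamentalDiscriminant Δ)
    (h : t^2*Δ = k^2 + 4*Δ) : Δ ∣ k := by
  rcases hf with ⟨_, hsq⟩ | ⟨h4, hsq, hm⟩
  · have hdvd : Δ ∣ k^2 := ⟨t^2 - 4, by linarith⟩
    exact (hsq.dvd_pow_iff_dvd two_ne_zero).mp hdvd
  · set m := Δ / 4 with hm4
    have hΔ4 : Δ = 4 * m := by omega
    have hm0 : 0 < m := by omega
    have h2k : (2:ℤ) ∣ k := by
      rw [hΔ4] at h
      have h2 : (2:ℤ) ∣ k^2 := ⟨2*(m*t^2 - 4*m), by linarith⟩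
      exact Int.prime_two.dvd_of_dvd_pow h2
    obtain ⟨κ, rfl⟩ := h2k
    have h2 : t^2 * m = κ^2 + 4*m := by
      have h4' : (4:ℤ) * (t^2*m) = 4 * (κ^2 + 4*m) := by rw [hΔ4] at h; ring_nf; ring_nf at h; linarith
      exact mul_left_cancel₀ (by norm_num) h4'
    have hmk : m ∣ κ^2 := ⟨t^2 - 4, by linarith⟩
    obtain ⟨j, rfl⟩ := (hsq.dvd_pow_iff_dvd two_ne_zero).mp hmk
    have h3 : t^2 = m*j^2 + 4 := by
      have : m * t^2 = m * (m*j^2 + 4) := by ring_nf; ring_nf at h2; linarith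
      exact mul_left_cancel₀ (by omega) this
    rcases Int.even_or_odd j with ⟨i, hi⟩ | ⟨i, hi⟩
    · exact ⟨i, by rw [hΔ4, hi]; ring⟩
    · exfalso
      subst hi
      rcases Int.even_or_odd t with ⟨c, hc⟩ | ⟨c, hc⟩ <;> subst hc
      · have : (4:ℤ) ∣ m := ⟨c*c - m*i^2 - m*i - 1, by linarith [h3]⟩
        omega
      · have : (4:ℤ) ∣ m - 1 := ⟨c*c + c - m*i^2 - m*i - 1, by linarith [h3]⟩
        omega

lemma sq_split {x y g : ℤ} (hx : 0 < x) (hy : 0 < y) (hcop : IsCoprime x y)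
    (h : x * y = g^2) : ∃ a b : ℤ, x = a^2 ∧ y = b^2 ∧ a*b = g := by
  obtain ⟨a, ha⟩ := Int.sq_of_isCoprime hcop h
  obtain ⟨b, hb⟩ := Int.sq_of_isCoprime hcop.symm (by rw [mul_comm]; exact h)
  have ha' : x = a^2 := by rcases ha with ha | ha; exacts [ha, by nlinarith]
  have hb' : y = b^2 := by rcases hb with hb | hb; exacts [hb, by nlinarith]
  have hab : (a*b)^2 = g^2 := by rw [mul_pow, ← ha', ← hb']; exact h
  have h' : a*b = g ∨ a*b = -g := by
    have := mul_self_eq_mul_self_iff (a := a*b) (b := g) |>.mp (by ring_nf; ring_nf at hab; linarith)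
    tauto
  rcases h' with h' | h'
  · exact ⟨a, b, ha', hb', h'⟩
  · exact ⟨-a, b, by rw [ha']; ring, hb', by linarith⟩

lemma Z2 {Δ N g : ℤ} (hΔ : 1 < Δ) (hf : IsFundamentalDiscriminant Δ) (hN : 1 ≤ N)
    (h : g^2 = N*(N*Δ+4)) : ∃ a b : ℤ, N = a^2 ∧ N*Δ+4 = b^2 ∧ a*b = g := by
  set M := N*Δ + 4 with hM
  have hM0 : 0 < M := by nlinarith
  have hN0 : 0 < N := hN
  set d : ℕ := Int.gcd N M with hd
  have hd0 : 0 < d := Int.gcd_pos_of_ne_zero_left M (by omega)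
  have hdvd4 : (d:ℤ) ∣ 4 := by
    have h1 : (d:ℤ) ∣ N := Int.gcd_dvd_left N M
    have h2 : (d:ℤ) ∣ M := Int.gcd_dvd_right N M
    have h3 : (d:ℤ) ∣ M - Δ * N := dvd_sub h2 (h1.mul_left Δ)
    convert h3 using 1; rw [hM]; ring
  have hd4 : d ∣ 4 := by exact_mod_cast hdvd4
  have hgE : (d:ℤ) = Int.gcd N M := by exact_mod_cast hd
  have hdle : d ≤ 4 := Nat.le_of_dvd (by norm_num) hd4
  interval_cases d
  · -- d = 1
    have hcop : IsCoprime N M := Int.isCoprime_iff_gcd_eq_one.mpr (by omega)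
    exact sq_split hN0 hM0 hcop h.symm
  · -- d = 2
    exfalso
    have hg2 : Int.gcd N M = 2 := by exact_mod_cast hgE.symm
    have h2N : (2:ℤ) ∣ N := by
      have h1 : ((Int.gcd N M : ℕ):ℤ) ∣ N := Int.gcd_dvd_left N M
      rw [hg2] at h1; exact_mod_cast h1
    have h2M : (2:ℤ) ∣ M := by
      have h1 : ((Int.gcd N M : ℕ):ℤ) ∣ M := Int.gcd_dvd_right N M
      rw [hg2] at h1; exact_mod_cast h1
    obtain ⟨N1, rfl⟩ := h2N
    obtain ⟨M1, hM1⟩ := h2M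
    have hgcd1 : Int.gcd N1 M1 = 1 := by
      rw [hM1, Int.gcd_mul_left] at hg2
      norm_num at hg2
      omega
    have hcop1 : IsCoprime N1 M1 := Int.isCoprime_iff_gcd_eq_one.mpr hgcd1
    have hgdvd : (2:ℤ) ∣ g := by
      refine Int.prime_two.dvd_of_dvd_pow (n := 2) ⟨2*(N1*M1), ?_⟩
      rw [h, hM1]; ring
    obtain ⟨g1, rfl⟩ := hgdvd
    have hprod : N1 * M1 = g1^2 := by
      rw [hM1] at h
      have h4 : (4:ℤ) * (N1*M1) = 4 * g1^2 := by ring_nf; ring_nf at h; linarith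
      exact mul_left_cancel₀ (by norm_num) h4
    obtain ⟨a, b, ha, hb, hab⟩ := sq_split (by omega) (by omega : 0 < M1) hcop1 hprod
    have hkey : b^2 = a^2*Δ + 2 := by
      have e : 2*M1 = 2*N1*Δ + 4 := by rw [← hM1, hM]
      rw [hb, ha] at e; linarith
    rcases hf with ⟨h1, _⟩ | ⟨h1, _, hm⟩
    · obtain ⟨D, hD⟩ : ∃ D, Δ = 4*D + 1 := ⟨Δ/4, by omega⟩
      rw [hD] at hkey
      rcases sq4 a with ⟨ca, hca⟩ | ⟨ca, hca⟩ <;> rcases sq4 b with ⟨cb, hcb⟩ | ⟨cb, hcb⟩ <;>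
        rw [hca, hcb] at hkey
      · have h4 : (4:ℤ) ∣ 2 := ⟨cb - 4*ca*D - ca, by linarith⟩; omega
      · have h4 : (4:ℤ) ∣ 1 := ⟨cb - 4*ca*D - ca, by linarith⟩; omega
      · have h4 : (4:ℤ) ∣ 3 := ⟨cb - 4*ca*D - ca - D, by linarith⟩; omega
      · have h4 : (4:ℤ) ∣ 2 := ⟨cb - 4*ca*D - ca - D, by linarith⟩; omega
    · obtain ⟨D, hD⟩ : ∃ D, Δ = 4*D := ⟨Δ/4, by omega⟩
      rw [hD] at hkey
      rcases sq4 b with ⟨cb, hcb⟩ | ⟨cb, hcb⟩ <;> rw [hcb] at hkey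
      · have h4 : (4:ℤ) ∣ 2 := ⟨cb - a^2*D, by linarith⟩; omega
      · have h4 : (4:ℤ) ∣ 1 := ⟨cb - a^2*D, by linarith⟩; omega
  · -- d = 3
    exact absurd hd4 (by norm_num)
  · -- d = 4
    have hg4 : Int.gcd N M = 4 := by exact_mod_cast hgE.symm
    have h4N : (4:ℤ) ∣ N := by
      have h1 : ((Int.gcd N M : ℕ):ℤ) ∣ N := Int.gcd_dvd_left N M
      rw [hg4] at h1; exact_mod_cast h1
    have h4M : (4:ℤ) ∣ M := by
      have h1 : ((Int.gcd N M : ℕ):ℤ) ∣ M := Int.gcd_dvd_right N M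
      rw [hg4] at h1; exact_mod_cast h1
    obtain ⟨N1, rfl⟩ := h4N
    obtain ⟨M1, hM1⟩ := h4M
    have hgcd1 : Int.gcd N1 M1 = 1 := by
      rw [hM1, Int.gcd_mul_left] at hg4
      norm_num at hg4
      omega
    have hcop1 : IsCoprime N1 M1 := Int.isCoprime_iff_gcd_eq_one.mpr hgcd1
    have hgdvd : (2:ℤ) ∣ g := by
      refine Int.prime_two.dvd_of_dvd_pow (n := 2) ⟨2*(4*(N1*M1)), ?_⟩
      rw [h, hM1]; ring
    obtain ⟨g1, rfl⟩ := hgdvd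
    have hgdvd2 : (2:ℤ) ∣ g1 := by
      refine Int.prime_two.dvd_of_dvd_pow (n := 2) ⟨2*(N1*M1), ?_⟩
      rw [hM1] at h
      have h4 : (4:ℤ) * g1^2 = 4 * (4*(N1*M1)) := by ring_nf; ring_nf at h; linarith
      have h5 := mul_left_cancel₀ (by norm_num : (4:ℤ) ≠ 0) h4
      rw [h5]; ring
    obtain ⟨g2, rfl⟩ := hgdvd2
    have hprod : N1 * M1 = g2^2 := by
      rw [hM1] at h
      have h16 : (16:ℤ) * (N1*M1) = 16 * g2^2 := by ring_nf; ring_nf at h; linarith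
      exact mul_left_cancel₀ (by norm_num) h16
    obtain ⟨a, b, ha, hb, hab⟩ := sq_split (by omega) (by omega : 0 < M1) hcop1 hprod
    exact ⟨2*a, 2*b, by rw [ha]; ring, by rw [hM1, hb]; ring, by rw [← hab]; ring⟩

namespace QS

variable (S : QS)

lemma toF_inj : Function.Injective S.toF :=
  NumberField.RingOfIntegers.coe_injective

@[simp] lemma toF_mul (x y : 𝓞 S.F) : S.toF (x*y) = S.toF x * S.toF y := map_mul _ _ _
@[simp] lemma toF_add (x y : 𝓞 S.F) : S.toF (x+y) = S.toF x + S.toF y := map_add _ _ _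
@[simp] lemma toF_sub (x y : 𝓞 S.F) : S.toF (x-y) = S.toF x - S.toF y := map_sub _ _ _
@[simp] lemma toF_neg (x : 𝓞 S.F) : S.toF (-x) = - S.toF x := map_neg _ _
@[simp] lemma toF_one : S.toF 1 = 1 := map_one _
@[simp] lemma toF_zero : S.toF 0 = 0 := map_zero _
@[simp] lemma toF_intCast (k : ℤ) : S.toF (k : 𝓞 S.F) = (k : S.F) := map_intCast _ _
@[simp] lemma toF_pow (x : 𝓞 S.F) (n : ℕ) : S.toF (x^n) = (S.toF x)^n := map_pow _ _ _

lemma sqrt_sq : S.sqrtΔ * S.sqrtΔ = ((S.Δ : ℤ) : S.F) := S.hsΔ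
lemma sigma_sqrt : S.σ S.sqrtΔ = - S.sqrtΔ := S.hsΔσ
lemma toF_sΔ : S.toF S.sΔ = S.sqrtΔ := rfl
lemma toF_sigmaO (x : 𝓞 S.F) : S.toF (S.σO x) = S.σ (S.toF x) := S.hσO x

lemma ΔF_ne : ((S.Δ : ℤ) : S.F) ≠ 0 := by
  have : S.Δ ≠ 0 := by have := S.hΔ; omega
  exact_mod_cast this

lemma sqrt_ne : S.sqrtΔ ≠ 0 := by
  intro h
  apply S.ΔF_ne
  rw [← S.sqrt_sq, h, mul_zero]

lemma fixed_rat (x : S.F) (hx : S.σ x = x) : ∃ q : ℚ, (q : S.F) = x := by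
  have hind : LinearIndependent ℚ ![(1 : S.F), S.sqrtΔ] := by
    rw [LinearIndependent.pair_iff]
    intro s t hst
    rcases eq_or_ne t 0 with rfl | ht
    · refine ⟨?_, rfl⟩
      simpa using hst
    · exfalso
      have ht' : ((t:S.F)) ≠ 0 := by exact_mod_cast ht
      have hs : S.sqrtΔ = ((-s/t : ℚ) : S.F) := by
        rw [Rat.smul_def, Rat.smul_def] at hst
        push_cast
        rw [eq_div_iff ht']
        linear_combination hst
      have h1 : S.σ S.sqrtΔ = S.sqrtΔ := by rw [hs, map_ratCast]
      rw [S.sigma_sqrt] at h1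
      have h2 : (2 : S.F) * S.sqrtΔ = 0 := by linear_combination -h1
      rcases mul_eq_zero.mp h2 with h3 | h3
      · exact two_ne_zero h3
      · exact S.sqrt_ne h3
  have hspan := hind.span_eq_top_of_card_eq_finrank (by simp [S.hdeg])
  have hx2 : x ∈ Submodule.span ℚ (Set.range ![(1:S.F), S.sqrtΔ]) := by
    rw [hspan]; trivial
  rw [show Set.range ![(1:S.F), S.sqrtΔ] = {(1:S.F), S.sqrtΔ} by
        simp [Matrix.range_cons, Matrix.range_empty, Set.pair_comm]] at hx2
  rw [Submodule.mem_span_pair] at hx2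
  obtain ⟨a, b, hab⟩ := hx2
  have hb : b = 0 := by
    have h1 := congrArg S.σ hab
    rw [map_add, Rat.smul_def, Rat.smul_def, map_mul, map_mul, map_ratCast, map_ratCast,
      map_one, S.sigma_sqrt, hx] at h1
    rw [← hab] at h1
    have h2 : (2:S.F) * ((b:S.F) * S.sqrtΔ) = 0 := by
      rw [Rat.smul_def, Rat.smul_def] at h1
      linear_combination -h1
    rcases mul_eq_zero.mp h2 with h3 | h3
    · exact absurd h3 two_ne_zero
    rcases mul_eq_zero.mp h3 with h4 | h4
    · exact_mod_cast h4
    · exact absurd h4 S.sqrt_ne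
  refine ⟨a, ?_⟩
  rw [← hab, hb, Rat.smul_def, Rat.smul_def]
  push_cast
  ring

lemma fixed_int (x : 𝓞 S.F) (hx : S.σ (S.toF x) = S.toF x) : ∃ k : ℤ, S.toF x = (k : S.F) := by
  obtain ⟨q, hq⟩ := S.fixed_rat _ hx
  have hint : IsIntegral ℤ ((q : S.F)) := by
    rw [hq]; exact NumberField.RingOfIntegers.isIntegral_coe x
  have hqi : IsIntegral ℤ q := by
    rw [show ((q : S.F)) = algebraMap ℚ S.F q from (eq_ratCast (algebraMap ℚ S.F) q).symm] at hint
    exact (isIntegral_algebraMap_iff (algebraMap ℚ S.F).injective).mp hint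
  obtain ⟨k, hk⟩ := IsIntegrallyClosed.isIntegral_iff.mp hqi
  refine ⟨k, ?_⟩
  rw [← hq, ← hk, eq_intCast (algebraMap ℤ ℚ) k]
  norm_cast


/-! ### unit value homomorphisms -/

def uval : (𝓞 S.F)ˣ →* ℝˣ :=
  Units.map ((S.ι.comp (algebraMap (𝓞 S.F) S.F)).toMonoidHom)

def uvalσ : (𝓞 S.F)ˣ →* ℝˣ :=
  Units.map (((S.ι.comp S.σ.toRingHom).comp (algebraMap (𝓞 S.F) S.F)).toMonoidHom)

lemma uval_apply (u : (𝓞 S.F)ˣ) : ((S.uval u : ℝˣ) : ℝ) = S.ι (S.toF ↑u) := rfl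

lemma uvalσ_apply (u : (𝓞 S.F)ˣ) : ((S.uvalσ u : ℝˣ) : ℝ) = S.ι (S.σ (S.toF ↑u)) := rfl

lemma uval_zpow (u : (𝓞 S.F)ˣ) (n : ℤ) :
    S.ι (S.toF ↑(u^n)) = (S.ι (S.toF ↑u))^n := by
  have h := congrArg Units.val (map_zpow S.uval u n)
  rw [Units.val_zpow_eq_zpow_val] at h
  rw [← S.uval_apply, ← S.uval_apply, h]

lemma uvalσ_zpow (u : (𝓞 S.F)ˣ) (n : ℤ) :
    S.ι (S.σ (S.toF ↑(u^n))) = (S.ι (S.σ (S.toF ↑u)))^n := by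
  have h := congrArg Units.val (map_zpow S.uvalσ u n)
  rw [Units.val_zpow_eq_zpow_val] at h
  rw [← S.uvalσ_apply, ← S.uvalσ_apply, h]

/-! ### norms of units -/

lemma unit_norm_fixed (u : (𝓞 S.F)ˣ) :
    S.σ (S.toF ((u : 𝓞 S.F) * S.σO ↑u)) = S.toF ((u : 𝓞 S.F) * S.σO ↑u) := by
  rw [toF_mul, toF_sigmaO, map_mul, S.hσ]
  ring

lemma unit_norm_int (u : (𝓞 S.F)ˣ) :
    ∃ k : ℤ, S.toF ↑u * S.σ (S.toF ↑u) = (k : S.F) ∧ (k = 1 ∨ k = -1) := by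
  obtain ⟨k, hk⟩ := S.fixed_int _ (S.unit_norm_fixed u)
  obtain ⟨k', hk'⟩ := S.fixed_int _ (S.unit_norm_fixed u⁻¹)
  have huu : ((u : 𝓞 S.F) * S.σO ↑u) * ((↑u⁻¹ : 𝓞 S.F) * S.σO ↑u⁻¹) = 1 := by
    have h1 : (u : 𝓞 S.F) * (↑u⁻¹ : 𝓞 S.F) = 1 := by
      rw [← Units.val_mul, mul_inv_cancel, Units.val_one]
    calc ((u : 𝓞 S.F) * S.σO ↑u) * ((↑u⁻¹ : 𝓞 S.F) * S.σO ↑u⁻¹)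
        = ((u : 𝓞 S.F) * ↑u⁻¹) * S.σO ((u : 𝓞 S.F) * ↑u⁻¹) := by rw [map_mul]; ring
      _ = 1 := by rw [h1, map_one, mul_one]
  have hmul : (k : S.F) * (k' : S.F) = 1 := by
    rw [← hk, ← hk', ← toF_mul, huu, toF_one]
  have hkk : k * k' = 1 := by exact_mod_cast hmul
  refine ⟨k, ?_, ?_⟩
  · rw [← hk, toF_mul, toF_sigmaO]
  · exact Int.isUnit_iff.mp (IsUnit.of_mul_eq_one (b := k') hkk)

lemma norm_one_of_pos (u : (𝓞 S.F)ˣ) (hu : S.Pos (S.toF ↑u)) :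
    S.toF ↑u * S.σ (S.toF ↑u) = 1 := by
  obtain ⟨k, hk, hk1⟩ := S.unit_norm_int u
  have hpos : (0:ℝ) < (k : ℝ) := by
    rw [← map_intCast S.ι, ← hk, map_mul]
    exact mul_pos hu.1 hu.2
  have hk2 : k = 1 := by rcases hk1 with rfl | rfl; exacts [rfl, by norm_num at hpos]
  rw [hk, hk2]; norm_num

lemma norm_one_iff (u : (𝓞 S.F)ˣ) :
    S.NmR (S.toF ↑u) = 1 ↔ S.toF ↑u * S.σ (S.toF ↑u) = 1 := by
  obtain ⟨k, hk, hk1⟩ := S.unit_norm_int u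
  unfold NmR
  constructor
  · intro h
    have h2 : S.ι (S.toF ↑u * S.σ (S.toF ↑u)) = 1 := by rw [map_mul]; exact h
    rw [hk, map_intCast] at h2
    have h3 : k = 1 := by exact_mod_cast h2
    rw [hk, h3]; norm_num
  · intro h
    have h2 := congrArg S.ι h
    rw [map_mul, map_one] at h2
    exact h2

lemma pos_unit_zpow (u : (𝓞 S.F)ˣ) (hu : S.Pos (S.toF ↑u)) (n : ℤ) :
    S.Pos (S.toF ↑(u^n)) := by
  constructor
  · rw [S.uval_zpow]; exact zpow_pos hu.1 n
  · rw [S.uvalσ_zpow]; exact zpow_pos hu.2 n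

/-! ### integrality helpers -/

lemma isInt_add {x y : S.F} (hx : S.isInt x) (hy : S.isInt y) : S.isInt (x + y) := by
  obtain ⟨a, ha⟩ := hx; obtain ⟨b, hb⟩ := hy
  exact ⟨a + b, by rw [toF_add, ha, hb]⟩

lemma isInt_neg {x : S.F} (hx : S.isInt x) : S.isInt (-x) := by
  obtain ⟨a, ha⟩ := hx
  exact ⟨-a, by rw [toF_neg, ha]⟩

lemma isInt_mulInt (a : 𝓞 S.F) {x : S.F} (hx : S.isInt x) : S.isInt (S.toF a * x) := by
  obtain ⟨b, hb⟩ := hx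
  exact ⟨a * b, by rw [toF_mul, hb]⟩

/-! ### the triviality predicate -/

def Triv (u : (𝓞 S.F)ˣ) : Prop := ∀ x : S.F, S.inDual x → S.isInt ((S.toF ↑u - 1) * x)

lemma triv_one : S.Triv 1 := by
  intro x _
  refine ⟨0, ?_⟩
  rw [toF_zero, Units.val_one, toF_one, sub_self, zero_mul]

lemma triv_mul {u v : (𝓞 S.F)ˣ} (hu : S.Triv u) (hv : S.Triv v) : S.Triv (u * v) := by
  intro x hx
  have key : (S.toF ↑(u*v) - 1) * x
      = S.toF (↑u) * ((S.toF ↑v - 1) * x) + (S.toF ↑u - 1) * x := by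
    rw [Units.val_mul, toF_mul]; ring
  rw [key]
  exact S.isInt_add (S.isInt_mulInt ↑u (hv x hx)) (hu x hx)

lemma triv_inv {u : (𝓞 S.F)ˣ} (hu : S.Triv u) : S.Triv u⁻¹ := by
  intro x hx
  have hinv : S.toF ↑u⁻¹ * S.toF ↑u = 1 := by
    rw [← toF_mul, ← Units.val_mul, inv_mul_cancel, Units.val_one, toF_one]
  have key : (S.toF ↑u⁻¹ - 1) * x = -(S.toF ↑u⁻¹ * ((S.toF ↑u - 1) * x)) := by
    linear_combination x * hinv
  rw [key]
  exact S.isInt_neg (S.isInt_mulInt _ (hu x hx))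

lemma triv_zpow {u : (𝓞 S.F)ˣ} (hu : S.Triv u) : ∀ n : ℤ, S.Triv (u^n) := by
  have hnat : ∀ n : ℕ, S.Triv (u^n) := by
    intro n
    induction n with
    | zero => rw [pow_zero]; exact S.triv_one
    | succ m ih => rw [pow_succ]; exact S.triv_mul ih hu
  intro n
  cases n with
  | ofNat m => rw [Int.ofNat_eq_coe, zpow_natCast]; exact hnat m
  | negSucc m => rw [zpow_negSucc]; exact S.triv_inv (hnat (m+1))


lemma eps_sq_zpow (εp : (𝓞 S.F)ˣ) (m : ℤ) : ((εp^2 : (𝓞 S.F)ˣ))^m = εp^(2*m) := by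
  rw [← zpow_natCast εp 2, ← zpow_mul]
  norm_num

lemma triv_eps_sq (εp : (𝓞 S.F)ˣ) (hεppos : S.Pos (S.toF ↑εp)) : S.Triv (εp^2) := by
  have hn : S.toF ↑εp * S.σ (S.toF ↑εp) = 1 := S.norm_one_of_pos εp hεppos
  set u := S.toF ↑εp with hu
  have hfix : S.σ (S.toF (((εp : 𝓞 S.F) - S.σO ↑εp) * S.sΔ))
      = S.toF (((εp : 𝓞 S.F) - S.σO ↑εp) * S.sΔ) := by
    rw [toF_mul, toF_sub, toF_sigmaO, toF_sΔ, map_mul, map_sub, S.hσ, S.sigma_sqrt]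
    ring
  obtain ⟨k, hk⟩ := S.fixed_int _ hfix
  rw [toF_mul, toF_sub, toF_sigmaO, toF_sΔ] at hk
  have hfix2 : S.σ (S.toF ((εp : 𝓞 S.F) + S.σO ↑εp)) = S.toF ((εp : 𝓞 S.F) + S.σO ↑εp) := by
    rw [toF_add, toF_sigmaO, map_add, S.hσ]
    ring
  obtain ⟨t, ht⟩ := S.fixed_int _ hfix2
  rw [toF_add, toF_sigmaO] at ht
  have hFeq : ((t:S.F))^2 * ((S.Δ : ℤ) : S.F) = ((k:S.F))^2 + 4*((S.Δ : ℤ) : S.F) := by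
    rw [← ht, ← hk, ← S.sqrt_sq]
    linear_combination (4 * (S.sqrtΔ * S.sqrtΔ)) * hn
  have hZ : t^2 * S.Δ = k^2 + 4*S.Δ := by exact_mod_cast hFeq
  obtain ⟨β, hβ⟩ := Z1 S.hΔ S.hfund hZ
  have husub : u - S.σ u = (β : S.F) * S.sqrtΔ := by
    have h0 : ((β:S.F) * S.sqrtΔ) * S.sqrtΔ = (u - S.σ u) * S.sqrtΔ := by
      rw [hk, hβ, mul_assoc, S.sqrt_sq]
      push_cast
      ring
    exact (mul_right_cancel₀ S.sqrt_ne h0).symm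
  intro x hx
  obtain ⟨a, ha⟩ := hx
  refine ⟨(β : 𝓞 S.F) * ↑εp * a, ?_⟩
  rw [toF_mul, toF_mul, toF_intCast, ha]
  have hpow : S.toF ↑(εp^2) = u^2 := by rw [Units.val_pow_eq_pow_val, toF_pow]
  rw [hpow]
  linear_combination (-(u*x)) * husub - x * hn

lemma no_gamma (εp : (𝓞 S.F)ˣ) (hεppos : S.Pos (S.toF ↑εp))
    (hεpgt : 1 < S.ι (S.toF ↑εp))
    (hεpgen : ∀ u : (𝓞 S.F)ˣ, S.Pos (S.toF ↑u) → ∃ n : ℤ, u = εp ^ n) :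
    ¬ ∃ γ : 𝓞 S.F, S.toF ↑εp - 1 = S.toF γ * S.sqrtΔ := by
  rintro ⟨γ, hγ⟩
  have hn : S.toF ↑εp * S.σ (S.toF ↑εp) = 1 := S.norm_one_of_pos εp hεppos
  set u := S.toF ↑εp with hudef
  set s := S.sqrtΔ with hsdef
  set c := S.toF γ with hcdef
  set Δc := ((S.Δ : ℤ) : S.F) with hΔcdef
  have hss : s * s = Δc := S.sqrt_sq
  have hu' : u = 1 + c * s := by linear_combination hγ
  have hσu' : S.σ u = 1 - S.σ c * s := by
    have h := congrArg S.σ hγ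
    rw [map_sub, map_one, map_mul, S.sigma_sqrt] at h
    linear_combination h
  obtain ⟨N, hN⟩ := S.fixed_int (γ * S.σO γ) (by
    rw [toF_mul, toF_sigmaO, map_mul, S.hσ]; ring)
  rw [toF_mul, toF_sigmaO, ← hcdef] at hN
  obtain ⟨g, hg⟩ := S.fixed_int (γ + S.σO γ) (by
    rw [toF_add, toF_sigmaO, map_add, S.hσ]; ring)
  rw [toF_add, toF_sigmaO, ← hcdef] at hg
  have hcc : (c - S.σ c) * s = (N:S.F) * Δc := by
    linear_combination hn - (S.σ u)*hu' - (1+c*s)*hσu' + (s*s)*hN + ((N:S.F))*hss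
  have hplus : u + S.σ u = 2 + (N:S.F) * Δc := by
    linear_combination hu' + hσu' + hcc
  have hminus : u - S.σ u = (g:S.F) * s := by
    linear_combination hu' - hσu' + s*hg
  -- N ≥ 1
  have hprod1 : S.ι u * S.ι (S.σ u) = 1 := by
    rw [← map_mul, hn, map_one]
  have hsum : (2:ℝ) < S.ι u + S.ι (S.σ u) := by
    nlinarith [hεpgt, hprod1]
  have hreal : S.ι (u + S.σ u) = 2 + (N:ℝ) * (S.Δ:ℝ) := by
    rw [hplus, map_add, map_mul, map_intCast, map_intCast, map_ofNat]
  have hNpos : 1 ≤ N := by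
    rw [map_add] at hreal
    have h1 : (0:ℝ) < (N:ℝ) * (S.Δ:ℝ) := by linarith
    have h2 : (0:ℤ) < N * S.Δ := by exact_mod_cast h1
    nlinarith [S.hΔ]
  -- g² = N(NΔ+4)
  have hgeq : ((g:S.F))^2 * Δc = (((N:S.F))*((N:S.F)*Δc+4))*Δc := by
    linear_combination (u + S.σ u + 2 + (N:S.F)*Δc) * hplus
      - (u - S.σ u + (g:S.F)*s) * hminus
      - 4*hn
      - (g:S.F)^2 * hss
  have hZg' : g^2 * S.Δ = (N*(N*S.Δ+4))*S.Δ := by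
    rw [hΔcdef] at hgeq; exact_mod_cast hgeq
  have hZg : g^2 = N*(N*S.Δ+4) :=
    mul_right_cancel₀ (by have := S.hΔ; omega : S.Δ ≠ 0) hZg'
  obtain ⟨a, b, haZ, hbZ, habZ⟩ := Z2 S.hΔ S.hfund hNpos hZg
  have haF : (N:S.F) = ((a:S.F))^2 := by exact_mod_cast haZ
  have hbF : (N:S.F)*Δc + 4 = ((b:S.F))^2 := by
    have h1 : ((N*S.Δ+4 : ℤ) : S.F) = ((b^2 : ℤ) : S.F) := by exact_mod_cast hbZ
    push_cast at h1
    rw [hΔcdef]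
    linear_combination h1
  have habF : (a:S.F) * (b:S.F) = (g:S.F) := by exact_mod_cast habZ
  have h2u : 2*u = 2 + (N:S.F)*Δc + (g:S.F)*s := by linear_combination hplus + hminus
  set v : S.F := ((b:S.F) + (a:S.F)*s)/2 with hvdef
  have hv2 : v * v = u := by
    have h4 : ((b:S.F) + (a:S.F)*s) * ((b:S.F)+(a:S.F)*s) = 4*u := by
      linear_combination (-2)*h2u - hbF - Δc*haF + ((a:S.F))^2*hss + 2*s*habF
    rw [hvdef, div_mul_div_comm, h4]
    norm_num
  have hσv : S.σ v = ((b:S.F) - (a:S.F)*s)/2 := by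
    rw [hvdef, map_div₀, map_add, map_mul, map_intCast, map_intCast, S.sigma_sqrt, map_ofNat]
    ring
  have hvv : v * S.σ v = 1 := by
    rw [hσv, hvdef, div_mul_div_comm]
    have h4 : ((b:S.F) + (a:S.F)*s) * ((b:S.F) - (a:S.F)*s) = 4 := by
      linear_combination -hbF + Δc*haF - ((a:S.F))^2*hss
    rw [h4]
    norm_num
  have hvint : IsIntegral ℤ v := by
    refine IsIntegral.of_pow (n := 2) (by norm_num) ?_
    rw [pow_two, hv2, hudef]
    exact NumberField.RingOfIntegers.isIntegral_coe _
  have hσvint : IsIntegral ℤ (S.σ v) := by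
    refine IsIntegral.of_pow (n := 2) (by norm_num) ?_
    rw [pow_two, ← map_mul, hv2]
    rw [hudef, ← toF_sigmaO]
    exact NumberField.RingOfIntegers.isIntegral_coe _
  set w : 𝓞 S.F := ⟨v, hvint⟩ with hwdef
  set w' : 𝓞 S.F := ⟨S.σ v, hσvint⟩ with hw'def
  have htoFw : S.toF w = v := rfl
  have htoFw' : S.toF w' = S.σ v := rfl
  have hww : w * w' = 1 := by
    apply S.toF_inj
    rw [toF_mul, htoFw, htoFw', hvv, toF_one]
  set vu : (𝓞 S.F)ˣ := Units.mkOfMulEqOne w w' hww with hvudef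
  have hvuval : (vu : 𝓞 S.F) = w := rfl
  have hvusq : vu^2 = εp := by
    apply Units.ext
    apply S.toF_inj
    rw [Units.val_pow_eq_pow_val, hvuval, toF_pow, htoFw, pow_two, hv2]
  have hvprod : S.ι v * S.ι (S.σ v) = 1 := by rw [← map_mul, hvv, map_one]
  have hvne : S.ι v ≠ 0 := by
    intro h0
    rw [h0, zero_mul] at hvprod
    norm_num at hvprod
  have key : ∀ z : (𝓞 S.F)ˣ, S.Pos (S.toF ↑z) → z^2 = εp → False := by
    intro z hz hz2
    obtain ⟨n, hzn⟩ := hεpgen z hz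
    have hzz : εp^(n+n) = εp^(1:ℤ) := by
      rw [zpow_add, zpow_one, ← hzn, ← pow_two, hz2]
    have hval := congrArg (fun y : (𝓞 S.F)ˣ => S.ι (S.toF ↑y)) hzz
    rw [S.uval_zpow, S.uval_zpow] at hval
    have hinj := zpow_right_injective₀ (a := S.ι (S.toF ↑εp))
      (by linarith) (by linarith [hεpgt]) hval
    omega
  rcases lt_or_gt_of_ne hvne with hneg | hpos
  · -- use -vu
    refine key (-vu) ⟨?_, ?_⟩ (by rw [neg_sq]; exact hvusq)
    · rw [show S.toF ↑(-vu) = -v from by rw [Units.val_neg, hvuval, toF_neg, htoFw]]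
      rw [map_neg]
      linarith
    · rw [show S.toF ↑(-vu) = -v from by rw [Units.val_neg, hvuval, toF_neg, htoFw]]
      rw [map_neg, map_neg]
      nlinarith [hvprod]
  · refine key vu ⟨?_, ?_⟩ hvusq
    · rw [show S.toF ↑vu = v from htoFw]
      exact hpos
    · rw [show S.toF ↑vu = v from htoFw]
      nlinarith [hvprod]

end QS

/-- Let `ε_F⁺ > 1` be the generator of the totally positive
units and `ε_Δ = (ε_F⁺)²`.  Then:
(1) a totally positive unit acts trivially on `A_Δ = 𝔡⁻¹/𝓞 F` iff it is a power
of `ε_Δ`; (2) the units of norm `1` are exactly `±(ε_F⁺)ⁿ`; (3), (4) the quotient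
of the norm-one units by `⟨ε_Δ⟩` is `(ℤ/2ℤ)²`, generated by the classes of `−1`
and `ε_F⁺`. -/
theorem discriminant_kernel_units (S : QS)
    (εp : (𝓞 S.F)ˣ) (hεppos : S.Pos (S.toF ↑εp)) (hεpgt : 1 < S.ι (S.toF ↑εp))
    (hεpgen : ∀ u : (𝓞 S.F)ˣ, S.Pos (S.toF ↑u) → ∃ n : ℤ, u = εp ^ n) :
    (∀ u : (𝓞 S.F)ˣ,
        (S.Pos (S.toF ↑u) ∧ ∀ x : S.F, S.inDual x → S.isInt ((S.toF ↑u - 1) * x))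
          ↔ ∃ n : ℤ, u = (εp ^ 2) ^ n) ∧
    (∀ u : (𝓞 S.F)ˣ,
        S.NmR (S.toF ↑u) = 1 ↔ ∃ n : ℤ, u = εp ^ n ∨ u = -(εp ^ n)) ∧
    (∀ u : (𝓞 S.F)ˣ, S.NmR (S.toF ↑u) = 1 →
        ∃ (a b : Fin 2) (n : ℤ),
          u = (-1 : (𝓞 S.F)ˣ) ^ (a : ℕ) * εp ^ (b : ℕ) * (εp ^ 2) ^ n) ∧
    (∀ (a b a' b' : Fin 2) (n n' : ℤ),
        (-1 : (𝓞 S.F)ˣ) ^ (a : ℕ) * εp ^ (b : ℕ) * (εp ^ 2) ^ n =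
          (-1 : (𝓞 S.F)ˣ) ^ (a' : ℕ) * εp ^ (b' : ℕ) * (εp ^ 2) ^ n' →
        a = a' ∧ b = b' ∧ n = n') := by
  have he0 : (0:ℝ) < S.ι (S.toF ↑εp) := hεppos.1
  have hene : S.ι (S.toF ↑εp) ≠ 0 := ne_of_gt he0
  have hnorm1 : S.toF ↑εp * S.σ (S.toF ↑εp) = 1 := S.norm_one_of_pos εp hεppos
  have hιnorm : S.ι (S.toF ↑εp) * S.ι (S.σ (S.toF ↑εp)) = 1 := by
    rw [← map_mul, hnorm1, map_one]
  have htrivsq : S.Triv (εp^2) := S.triv_eps_sq εp hεppos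
  have negcoe : ∀ w : (𝓞 S.F)ˣ, S.toF ↑(-w) = -(S.toF ↑w) := by
    intro w; rw [Units.val_neg, S.toF_neg]
  -- Part 2
  have part2 : ∀ u : (𝓞 S.F)ˣ,
      S.NmR (S.toF ↑u) = 1 ↔ ∃ n : ℤ, u = εp ^ n ∨ u = -(εp ^ n) := by
    intro u
    constructor
    · intro h
      have huu : S.toF ↑u * S.σ (S.toF ↑u) = 1 := (S.norm_one_iff u).mp h
      have hprod : S.ι (S.toF ↑u) * S.ι (S.σ (S.toF ↑u)) = 1 := by
        rw [← map_mul, huu, map_one]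
      have hne : S.ι (S.toF ↑u) ≠ 0 := by
        intro h0; rw [h0, zero_mul] at hprod; norm_num at hprod
      rcases lt_or_gt_of_ne hne with hneg | hpos
      · have hp : S.Pos (S.toF ↑(-u)) := by
          constructor
          · rw [negcoe, map_neg]; linarith
          · rw [negcoe, map_neg, map_neg]; nlinarith
        obtain ⟨n, hn⟩ := hεpgen (-u) hp
        exact ⟨n, Or.inr (by rw [← hn, neg_neg])⟩
      · obtain ⟨n, hn⟩ := hεpgen u ⟨hpos, by nlinarith⟩
        exact ⟨n, Or.inl hn⟩
    · have hval : ∀ n : ℤ, S.NmR (S.toF ↑(εp^n)) = 1 := by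
        intro n
        show S.ι (S.toF ↑(εp^n)) * S.ι (S.σ (S.toF ↑(εp^n))) = 1
        rw [S.uval_zpow, S.uvalσ_zpow, ← mul_zpow, hιnorm, one_zpow]
      rintro ⟨n, rfl | rfl⟩
      · exact hval n
      · show S.ι (S.toF ↑(-(εp^n))) * S.ι (S.σ (S.toF ↑(-(εp^n)))) = 1
        rw [negcoe, map_neg, map_neg, map_neg, neg_mul_neg]
        exact hval n
  -- Part 1
  have part1 : ∀ u : (𝓞 S.F)ˣ,
      (S.Pos (S.toF ↑u) ∧ ∀ x : S.F, S.inDual x → S.isInt ((S.toF ↑u - 1) * x))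
        ↔ ∃ n : ℤ, u = (εp ^ 2) ^ n := by
    intro u
    constructor
    · rintro ⟨hpos, htriv⟩
      obtain ⟨n, rfl⟩ := hεpgen u hpos
      rcases Int.even_or_odd n with ⟨m, hm⟩ | ⟨m, hm⟩
      · exact ⟨m, by rw [S.eps_sq_zpow]; congr 1; omega⟩
      · exfalso
        have h1 : S.Triv ((εp^2)^(-m)) := S.triv_zpow htrivsq (-m)
        have hh : S.Triv (εp^n * (εp^2)^(-m)) := S.triv_mul htriv h1
        have hE : εp^n * (εp^2)^(-m) = εp := by
          rw [S.eps_sq_zpow, ← zpow_add, show n + 2*(-m) = 1 by omega, zpow_one]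
        rw [hE] at hh
        have hdual : S.inDual (S.sqrtΔ)⁻¹ :=
          ⟨1, by rw [S.toF_one, mul_inv_cancel₀ S.sqrt_ne]⟩
        obtain ⟨γ, hγ⟩ := hh _ hdual
        refine S.no_gamma εp hεppos hεpgt hεpgen ⟨γ, ?_⟩
        rw [hγ, mul_assoc, inv_mul_cancel₀ S.sqrt_ne, mul_one]
    · rintro ⟨n, rfl⟩
      constructor
      · rw [S.eps_sq_zpow]
        exact S.pos_unit_zpow εp hεppos (2*n)
      · exact S.triv_zpow htrivsq n
  -- decomposition helper
  have hdecomp : ∀ n : ℤ, ∃ (b : Fin 2) (m : ℤ), εp^n = εp^((b:ℕ)) * (εp^2)^m := by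
    intro n
    rcases Int.even_or_odd n with ⟨m, hm⟩ | ⟨m, hm⟩
    · refine ⟨0, m, ?_⟩
      simp only [Fin.val_zero, pow_zero, one_mul]
      rw [S.eps_sq_zpow]; congr 1; omega
    · refine ⟨1, m, ?_⟩
      simp only [Fin.val_one, pow_one]
      rw [S.eps_sq_zpow, show n = 1 + 2*m by omega, zpow_add, zpow_one]
  -- Part 3
  have part3 : ∀ u : (𝓞 S.F)ˣ, S.NmR (S.toF ↑u) = 1 →
      ∃ (a b : Fin 2) (n : ℤ),
        u = (-1 : (𝓞 S.F)ˣ) ^ (a : ℕ) * εp ^ (b : ℕ) * (εp ^ 2) ^ n := by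
    intro u hu
    obtain ⟨n, hn | hn⟩ := (part2 u).mp hu
    · obtain ⟨b, m, hbm⟩ := hdecomp n
      refine ⟨0, b, m, ?_⟩
      simp only [Fin.val_zero, pow_zero, one_mul]
      rw [hn, hbm]
    · obtain ⟨b, m, hbm⟩ := hdecomp n
      refine ⟨1, b, m, ?_⟩
      simp only [Fin.val_one, pow_one]
      rw [hn, hbm, neg_one_mul, neg_mul]
  -- value of a word
  have hval_word : ∀ (a b : ℕ) (n : ℤ),
      S.ι (S.toF ↑((-1 : (𝓞 S.F)ˣ)^a * εp^b * (εp^2)^n))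
        = (-1:ℝ)^a * (S.ι (S.toF ↑εp))^((b:ℤ) + 2*n) := by
    intro a b n
    rw [S.eps_sq_zpow]
    rw [Units.val_mul, Units.val_mul, S.toF_mul, S.toF_mul, map_mul, map_mul]
    have c1 : S.ι (S.toF ↑((-1 : (𝓞 S.F)ˣ)^a)) = (-1:ℝ)^a := by
      rw [Units.val_pow_eq_pow_val, S.toF_pow, map_pow, Units.val_neg, Units.val_one,
        S.toF_neg, S.toF_one, map_neg, map_one]
    have c2 : S.ι (S.toF ↑(εp^b)) = (S.ι (S.toF ↑εp))^((b:ℤ)) := by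
      rw [Units.val_pow_eq_pow_val, S.toF_pow, map_pow, zpow_natCast]
    rw [c1, c2, S.uval_zpow, mul_assoc, ← zpow_add₀ hene]
  -- Part 4
  have part4 : ∀ (a b a' b' : Fin 2) (n n' : ℤ),
      (-1 : (𝓞 S.F)ˣ) ^ (a : ℕ) * εp ^ (b : ℕ) * (εp ^ 2) ^ n =
        (-1 : (𝓞 S.F)ˣ) ^ (a' : ℕ) * εp ^ (b' : ℕ) * (εp ^ 2) ^ n' →
      a = a' ∧ b = b' ∧ n = n' := by
    intro a b a' b' n n' heq
    have hv := congrArg (fun z : (𝓞 S.F)ˣ => S.ι (S.toF ↑z)) heq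
    rw [hval_word, hval_word] at hv
    have hpz : ∀ m : ℤ, (0:ℝ) < (S.ι (S.toF ↑εp))^m := fun m => zpow_pos he0 m
    have hzinj : ∀ X Y : ℤ, (S.ι (S.toF ↑εp))^X = (S.ι (S.toF ↑εp))^Y → X = Y :=
      fun X Y h => zpow_right_injective₀ he0 (by linarith) h
    have haLt := a.isLt; have haLt' := a'.isLt
    have hbLt := b.isLt; have hbLt' := b'.isLt
    have hA : (a:ℕ) = 0 ∨ (a:ℕ) = 1 := by omega
    have hA' : (a':ℕ) = 0 ∨ (a':ℕ) = 1 := by omega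
    rcases hA with h0 | h0 <;> rcases hA' with h0' | h0' <;> rw [h0, h0'] at hv <;>
      norm_num at hv
    · have hXY := hzinj _ _ hv
      exact ⟨Fin.ext (by omega), Fin.ext (by omega), by omega⟩
    · exfalso
      have p1 := hpz ((b:ℤ) + 2*n); have p2 := hpz ((b':ℤ) + 2*n')
      linarith
    · exfalso
      have p1 := hpz ((b:ℤ) + 2*n); have p2 := hpz ((b':ℤ) + 2*n')
      linarith
    · have hXY := hzinj _ _ hv
      exact ⟨Fin.ext (by omega), Fin.ext (by omega), by omega⟩
  exact ⟨part1, part2, part3, part4⟩
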